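/- Let α ∈ ℝ, R > 0 and L > 2πR. Let f : [0,∞) → ℝ be continuously differentiable with 0 < ∫₀^∞ f(t)²·(1+t) dt < ∞ and ∫₀^∞ f'(t)²·(1+t) dt < ∞. Suppose Q_R := [ ∫₀^∞ f'(t)²·(R+t) dt + α·R·f(0)² ] / ∫₀^∞ f(t)²·(R+t) dt < 0. Then [ ∫₀^∞ f'(t)²·(L + 2πt) dt + α·L·f(0)² ] / ∫₀^∞ f(t)²·(L + 2πt) dt < Q_R. -/

import Mathlib

open MeasureTheory

lemma stmt_11_aux_int (g : ℝ → ℝ) (hg : Continuous g)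
    (hint : IntegrableOn (fun t => (g t) ^ 2 * (1 + t)) (Set.Ioi (0 : ℝ))) :
    IntegrableOn (fun t => (g t) ^ 2) (Set.Ioi (0 : ℝ)) ∧
      IntegrableOn (fun t => (g t) ^ 2 * t) (Set.Ioi (0 : ℝ)) := by
  constructor
  · apply hint.mono' ((hg.pow 2).aestronglyMeasurable)
    rw [ae_restrict_iff' measurableSet_Ioi]
    refine Filter.Eventually.of_forall fun t ht => ?_
    have ht' : (0:ℝ) < t := ht
    simp only [Pi.pow_apply]
    rw [Real.norm_eq_abs, abs_of_nonneg (sq_nonneg _)]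
    nlinarith [sq_nonneg (g t)]
  · apply hint.mono' (((hg.pow 2).mul continuous_id).aestronglyMeasurable)
    rw [ae_restrict_iff' measurableSet_Ioi]
    refine Filter.Eventually.of_forall fun t ht => ?_
    have ht' : (0:ℝ) < t := ht
    simp only [Pi.mul_apply, Pi.pow_apply, id]
    rw [Real.norm_eq_abs, abs_of_nonneg (mul_nonneg (sq_nonneg _) ht'.le)]
    nlinarith [sq_nonneg (g t)]

lemma stmt_11_aux_eq (g : ℝ → ℝ) (a b : ℝ)
    (h1 : IntegrableOn (fun t => (g t) ^ 2) (Set.Ioi (0 : ℝ)))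
    (h2 : IntegrableOn (fun t => (g t) ^ 2 * t) (Set.Ioi (0 : ℝ))) :
    (∫ t in Set.Ioi (0 : ℝ), (g t) ^ 2 * (a + b * t)) =
      a * (∫ t in Set.Ioi (0 : ℝ), (g t) ^ 2) +
        b * (∫ t in Set.Ioi (0 : ℝ), (g t) ^ 2 * t) := by
  have : (fun t => (g t) ^ 2 * (a + b * t)) =
      fun t => a * (g t) ^ 2 + b * ((g t) ^ 2 * t) := by
    funext t; ring
  rw [this, integral_add (h1.const_mul a) (h2.const_mul b),
    MeasureTheory.integral_const_mul, MeasureTheory.integral_const_mul]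

/-- If `L > 2πR`, the Rayleigh quotient of the radial trial function on the
exterior of a convex domain of perimeter `L` is strictly smaller than the
(negative) Rayleigh quotient `Q_R` of the radial fibre on the exterior of a
disk of radius `R`. -/
theorem stmt_11 (α R L : ℝ) (hR : 0 < R) (hL : 2 * Real.pi * R < L)
    (f : ℝ → ℝ) (hf : ContDiff ℝ 1 f)
    (hfsq : IntegrableOn (fun t => (f t) ^ 2 * (1 + t)) (Set.Ioi (0 : ℝ)))
    (hfpos : 0 < ∫ t in Set.Ioi (0 : ℝ), (f t) ^ 2 * (1 + t))
    (hf' : IntegrableOn (fun t => (deriv f t) ^ 2 * (1 + t)) (Set.Ioi (0 : ℝ)))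
    (hQ : ((∫ t in Set.Ioi (0 : ℝ), (deriv f t) ^ 2 * (R + t)) +
          α * R * (f 0) ^ 2) /
        (∫ t in Set.Ioi (0 : ℝ), (f t) ^ 2 * (R + t)) < 0) :
    ((∫ t in Set.Ioi (0 : ℝ), (deriv f t) ^ 2 * (L + 2 * Real.pi * t)) +
        α * L * (f 0) ^ 2) /
      (∫ t in Set.Ioi (0 : ℝ), (f t) ^ 2 * (L + 2 * Real.pi * t)) <
    ((∫ t in Set.Ioi (0 : ℝ), (deriv f t) ^ 2 * (R + t)) +
        α * R * (f 0) ^ 2) /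
      (∫ t in Set.Ioi (0 : ℝ), (f t) ^ 2 * (R + t)) := by
  have hcf : Continuous f := hf.continuous
  have hcf' : Continuous (deriv f) := hf.continuous_deriv le_rfl
  obtain ⟨h1, h2⟩ := stmt_11_aux_int f hcf hfsq
  obtain ⟨h3, h4⟩ := stmt_11_aux_int (deriv f) hcf' hf'
  set F := ∫ t in Set.Ioi (0 : ℝ), (f t) ^ 2 with hFdef
  set Ft := ∫ t in Set.Ioi (0 : ℝ), (f t) ^ 2 * t with hFtdef
  set P := ∫ t in Set.Ioi (0 : ℝ), (deriv f t) ^ 2 with hPdef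
  set Pt := ∫ t in Set.Ioi (0 : ℝ), (deriv f t) ^ 2 * t with hPtdef
  have eq1 : (∫ t in Set.Ioi (0 : ℝ), (f t) ^ 2 * (R + t)) = R * F + Ft := by
    have := stmt_11_aux_eq f R 1 h1 h2
    simpa using this
  have eq2 : (∫ t in Set.Ioi (0 : ℝ), (deriv f t) ^ 2 * (R + t)) = R * P + Pt := by
    have := stmt_11_aux_eq (deriv f) R 1 h3 h4
    simpa using this
  have eq3 : (∫ t in Set.Ioi (0 : ℝ), (f t) ^ 2 * (L + 2 * Real.pi * t)) =
      L * F + 2 * Real.pi * Ft := by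
    have := stmt_11_aux_eq f L (2 * Real.pi) h1 h2
    simpa using this
  have eq4 : (∫ t in Set.Ioi (0 : ℝ), (deriv f t) ^ 2 * (L + 2 * Real.pi * t)) =
      L * P + 2 * Real.pi * Pt := by
    have := stmt_11_aux_eq (deriv f) L (2 * Real.pi) h3 h4
    simpa using this
  have eq0 : (∫ t in Set.Ioi (0 : ℝ), (f t) ^ 2 * (1 + t)) = F + Ft := by
    have := stmt_11_aux_eq f 1 1 h1 h2
    simpa using this
  rw [eq1, eq2, eq3, eq4]
  rw [eq1, eq2] at hQ
  rw [eq0] at hfpos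
  -- basic sign facts
  have hF : 0 ≤ F := setIntegral_nonneg measurableSet_Ioi fun t _ => sq_nonneg _
  have hP : 0 ≤ P := setIntegral_nonneg measurableSet_Ioi fun t _ => sq_nonneg _
  have hPt : 0 ≤ Pt := setIntegral_nonneg measurableSet_Ioi fun t ht =>
    mul_nonneg (sq_nonneg _) (le_of_lt ht)
  have hFt0 : 0 ≤ Ft := setIntegral_nonneg measurableSet_Ioi fun t ht =>
    mul_nonneg (sq_nonneg _) (le_of_lt ht)
  -- Ft > 0
  have hFt : 0 < Ft := by
    rcases lt_or_eq_of_le hFt0 with h | h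
    · exact h
    · exfalso
      have hzero : (fun t => (f t) ^ 2 * t) =ᵐ[volume.restrict (Set.Ioi (0:ℝ))] 0 := by
        have := (integral_eq_zero_iff_of_nonneg_ae (f := fun t => (f t) ^ 2 * t) ?_ h2).mp h.symm
        · exact this
        · filter_upwards [ae_restrict_mem measurableSet_Ioi] with t ht
          exact mul_nonneg (sq_nonneg _) (le_of_lt ht)
      have hf0 : (fun t => (f t) ^ 2) =ᵐ[volume.restrict (Set.Ioi (0:ℝ))] 0 := by
        filter_upwards [hzero, ae_restrict_mem measurableSet_Ioi] with t h0 ht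
        have ht' : (0:ℝ) < t := ht
        have : (f t) ^ 2 * t = 0 := h0
        have := mul_eq_zero.mp this
        rcases this with h' | h'
        · exact h'
        · exact absurd h' (ne_of_gt ht')
      have hFz : F = 0 := by
        rw [hFdef]; exact integral_eq_zero_of_ae hf0
      have hFtz : Ft = 0 := h.symm
      rw [hFz, hFtz] at hfpos
      simp at hfpos
  have hpi : 0 < Real.pi := Real.pi_pos
  have hB : 0 < R * F + Ft := by nlinarith
  have hN : R * P + Pt + α * R * (f 0) ^ 2 < 0 := by
    rcases div_neg_iff.mp hQ with ⟨_, hB'⟩ | ⟨hN, _⟩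
    · linarith
    · exact hN
  have hB' : 0 < L * F + 2 * Real.pi * Ft := by nlinarith
  rw [div_lt_div_iff₀ hB' hB]
  have hs : P + α * (f 0) ^ 2 < 0 := by nlinarith
  have hkey : (P + α * (f 0) ^ 2) * Ft < Pt * F :=
    lt_of_lt_of_le (mul_neg_of_neg_of_pos hs hFt) (mul_nonneg hPt hF)
  have hc : 0 < L - 2 * Real.pi * R := by linarith
  nlinarith [mul_pos hc (sub_pos.mpr hkey)]
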